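/- Let N be a weakly connected, forward-backward conflict free Petri net (without self-loops) having at least one proper source place or at least one proper sink place. If the sink marking M_d is reachable from the source marking M₀, then N is acyclic. -/

import Mathlib

/-- A Petri net: finite sets of places and transitions, with input and output places
for each transition. -/
structure PetriNet where
  P : Type
  T : Type
  [fintypeP : Fintype P]
  [fintypeT : Fintype T]
  [decEqP : DecidableEq P]
  [decEqT : DecidableEq T]
  inp : T → Finset P
  out : T → Finset P

attribute [instance] PetriNet.fintypeP PetriNet.fintypeT PetriNet.decEqP PetriNet.decEqT

namespace PetriNet

variable (N : PetriNet)

/-- No place is both an input and an output of the same transition. -/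
def NoSelfLoops : Prop := ∀ t, Disjoint (N.inp t) (N.out t)

/-- The input transitions of a place: those of which it is an output. -/
def pIn (p : N.P) : Finset N.T := Finset.univ.filter (fun t => p ∈ N.out t)

/-- The output transitions of a place: those of which it is an input. -/
def pOut (p : N.P) : Finset N.T := Finset.univ.filter (fun t => p ∈ N.inp t)

/-- Forward-backward conflict freeness: every place has at most one input and at most
one output transition. -/
def FBCF : Prop := ∀ p : N.P, (N.pIn p).card ≤ 1 ∧ (N.pOut p).card ≤ 1

/-- The arcs of the directed graph of the net, on vertices `P ⊕ T`. -/
def arc : (N.P ⊕ N.T) → (N.P ⊕ N.T) → Prop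
  | .inl p, .inr t => p ∈ N.inp t
  | .inr t, .inl p => p ∈ N.out t
  | _, _ => False

/-- The net is acyclic: its directed graph has no directed cycle. -/
def Acyclic : Prop := ∀ v, ¬ Relation.TransGen N.arc v v

/-- The underlying undirected graph of the net is connected. -/
def WeaklyConnected : Prop :=
  ∀ v w, Relation.ReflTransGen (fun a b => N.arc a b ∨ N.arc b a) v w

def IsSource (p : N.P) : Prop := N.pIn p = ∅
def IsSink (p : N.P) : Prop := N.pOut p = ∅
def IsProperSource (p : N.P) : Prop := N.IsSource p ∧ N.pOut p ≠ ∅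
def IsProperSink (p : N.P) : Prop := N.IsSink p ∧ N.pIn p ≠ ∅

/-- The source marking: one token in every source place, none elsewhere. -/
def M0 : N.P → ℕ := fun p => if N.pIn p = ∅ then 1 else 0

/-- The sink marking: one token in every sink place, none elsewhere. -/
def Md : N.P → ℕ := fun p => if N.pOut p = ∅ then 1 else 0

/-- A transition is enabled when each of its input places holds a token. -/
def Enabled (M : N.P → ℕ) (t : N.T) : Prop := ∀ p ∈ N.inp t, 1 ≤ M p

/-- The marking obtained by firing a transition. -/
def fire (M : N.P → ℕ) (t : N.T) : N.P → ℕ :=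
  fun p => if p ∈ N.inp t then M p - 1 else if p ∈ N.out t then M p + 1 else M p

/-- `FireSeq M ts M'` holds when successively firing the (enabled) transitions of the
list `ts` transforms the marking `M` into `M'`. -/
inductive FireSeq : (N.P → ℕ) → List N.T → (N.P → ℕ) → Prop
  | nil (M : N.P → ℕ) : FireSeq M [] M
  | cons {M M' : N.P → ℕ} (t : N.T) (ts : List N.T) :
      N.Enabled M t → FireSeq (N.fire M t) ts M' → FireSeq M (t :: ts) M'

/-- Reachability of a marking from another by a firing sequence. -/
def Reachable (M₀ M : N.P → ℕ) : Prop := ∃ ts, N.FireSeq M₀ ts M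


lemma mem_pIn {N : PetriNet} {p : N.P} {t : N.T} : t ∈ N.pIn p ↔ p ∈ N.out t := by
  simp [pIn]

lemma mem_pOut {N : PetriNet} {p : N.P} {t : N.T} : t ∈ N.pOut p ↔ p ∈ N.inp t := by
  simp [pOut]

lemma marking_eq (N : PetriNet) (hself : N.NoSelfLoops)
    {M M' : N.P → ℕ} {ts : List N.T} (h : N.FireSeq M ts M') :
    ∀ p, M' p + ∑ t ∈ N.pOut p, ts.count t = M p + ∑ t ∈ N.pIn p, ts.count t := by
  induction h with
  | nil M => simp
  | cons t ts hen hseq ih =>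
    rename_i M₁ M₂
    intro p
    have hc : ∀ (S : Finset N.T), ∑ t' ∈ S, (t :: ts).count t'
        = (∑ t' ∈ S, ts.count t') + (if t ∈ S then 1 else 0) := by
      intro S
      simp only [List.count_cons, beq_iff_eq, Finset.sum_add_distrib]
      congr 1
      rw [Finset.sum_ite_eq S t (fun _ => 1)]
    have ihp := ih p
    rw [hc, hc]
    by_cases h1 : p ∈ N.inp t
    · have h2 : p ∉ N.out t := fun h2 => Finset.disjoint_left.mp (hself t) h1 h2
      have hM : 1 ≤ M₁ p := hen p h1
      have hfire : N.fire M₁ t p = M₁ p - 1 := by simp [fire, h1]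
      rw [hfire] at ihp
      have ht1 : t ∈ N.pOut p := mem_pOut.mpr h1
      have ht2 : t ∉ N.pIn p := fun h => h2 (mem_pIn.mp h)
      simp only [ht1, ht2, if_true, if_false]
      omega
    · by_cases h2 : p ∈ N.out t
      · have hfire : N.fire M₁ t p = M₁ p + 1 := by simp [fire, h1, h2]
        rw [hfire] at ihp
        have ht1 : t ∉ N.pOut p := fun h => h1 (mem_pOut.mp h)
        have ht2 : t ∈ N.pIn p := mem_pIn.mpr h2
        simp only [ht1, ht2, if_true, if_false]
        omega
      · have hfire : N.fire M₁ t p = M₁ p := by simp [fire, h1, h2]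
        rw [hfire] at ihp
        have ht1 : t ∉ N.pOut p := fun h => h1 (mem_pOut.mp h)
        have ht2 : t ∉ N.pIn p := fun h => h2 (mem_pIn.mp h)
        simp only [ht1, ht2, if_false]
        omega

lemma fire_order (N : PetriNet) {t t' : N.T} (hne : t ≠ t')
    {M M' : N.P → ℕ} {ts : List N.T} (h : N.FireSeq M ts M') :
    ∀ p, N.pIn p = {t} → N.pOut p = {t'} → M p = 0 → t' ∈ ts →
    ts.idxOf t < ts.idxOf t' := by
  induction h with
  | nil M => intro p _ _ _ hmem; exact absurd hmem List.not_mem_nil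
  | cons a ts hen hseq ih =>
    rename_i M₁ M₂
    intro p hin hout hM ht'
    by_cases ha' : a = t'
    · exfalso
      have hp : p ∈ N.inp t' := mem_pOut.mp (hout ▸ Finset.mem_singleton_self t')
      have := hen p (ha' ▸ hp)
      omega
    · have ht'mem : t' ∈ ts := by
        rcases List.mem_cons.mp ht' with h | h
        · exact absurd h.symm ha'
        · exact h
      have e1 : (a :: ts).idxOf t' = (ts.idxOf t').succ :=
        List.idxOf_cons_ne ts ha'
      by_cases ha : a = t
      · subst ha
        have e2 : (a :: ts).idxOf a = 0 := List.idxOf_cons_self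
        omega
      · have hfp : N.fire M₁ a p = 0 := by
          have h1 : p ∉ N.inp a := fun h =>
            ha' (Finset.mem_singleton.mp (hout ▸ mem_pOut.mpr h))
          have h2 : p ∉ N.out a := fun h =>
            ha (Finset.mem_singleton.mp (hin ▸ mem_pIn.mpr h))
          simp [fire, h1, h2, hM]
        have hlt := ih p hin hout hfp ht'mem
        have e2 : (a :: ts).idxOf t = (ts.idxOf t).succ :=
          List.idxOf_cons_ne ts ha
        omega

/-- Auxiliary relation on transitions: `t` feeds a place consumed by `t'`. -/
def Rrel (N : PetriNet) (t t' : N.T) : Prop := ∃ p, p ∈ N.out t ∧ p ∈ N.inp t'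

lemma transGen_R_of_arc (N : PetriNet) {t : N.T} {c : N.P ⊕ N.T}
    (h : Relation.TransGen N.arc (Sum.inr t) c) :
    (∀ p, c = Sum.inl p → ∃ t₀, p ∈ N.out t₀ ∧ Relation.ReflTransGen N.Rrel t t₀) ∧
    (∀ t', c = Sum.inr t' → Relation.TransGen N.Rrel t t') := by
  induction h with
  | single h =>
    constructor
    · rintro p rfl
      exact ⟨t, h, Relation.ReflTransGen.refl⟩
    · rintro t' rfl
      exact absurd h id
  | tail hab hbc ih =>
    rename_i b c
    constructor
    · rintro p rfl
      match b, hbc with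
      | Sum.inr t₁, hbc =>
        exact ⟨t₁, hbc, ((ih.2 t₁ rfl).to_reflTransGen)⟩
    · rintro t' rfl
      match b, hbc with
      | Sum.inl p, hbc =>
        obtain ⟨t₀, h1, h2⟩ := ih.1 p rfl
        exact Relation.TransGen.tail' h2 ⟨p, h1, hbc⟩

lemma exists_transGen_R (N : PetriNet) {v} (h : Relation.TransGen N.arc v v) :
    ∃ t, Relation.TransGen N.Rrel t t := by
  match v with
  | Sum.inr t => exact ⟨t, (N.transGen_R_of_arc h).2 t rfl⟩
  | Sum.inl p =>
    obtain ⟨b, hb, hbc⟩ := Relation.TransGen.head'_iff.mp h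
    match b, hb with
    | Sum.inr t, hb =>
      exact ⟨t, (N.transGen_R_of_arc (Relation.TransGen.tail' hbc hb)).2 t rfl⟩

/-- Let `N` be a weakly connected, forward-backward conflict free Petri
net (without self-loops) having at least one proper source place or at least one proper
sink place. If the sink marking is reachable from the source marking, then `N` is
acyclic. -/
theorem acyclic_of_sink_reachable_from_source (N : PetriNet)
    (hself : N.NoSelfLoops) (hfbcf : N.FBCF) (hconn : N.WeaklyConnected)
    (hproper : (∃ p, N.IsProperSource p) ∨ (∃ p, N.IsProperSink p))
    (hreach : N.Reachable N.M0 N.Md) :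
    N.Acyclic := by
  obtain ⟨ts, hts⟩ := hreach
  have hmark := N.marking_eq hself hts
  -- the "value" of a vertex
  set val : N.P ⊕ N.T → ℕ := fun v => match v with
    | .inl p => N.M0 p + ∑ t ∈ N.pIn p, ts.count t
    | .inr t => ts.count t with hvaldef
  have harc : ∀ a b, N.arc a b → val a = val b := by
    rintro (p | t) (q | u) h
    · exact absurd h id
    · -- p ∈ inp u
      have hu : u ∈ N.pOut p := mem_pOut.mpr h
      have hsing : N.pOut p = {u} :=
        Finset.eq_singleton_iff_unique_mem.mpr
          ⟨hu, fun x hx => Finset.card_le_one.mp (hfbcf p).2 x hx u hu⟩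
      have hMd : N.Md p = 0 := by
        simp [Md, hsing]
      have := hmark p
      rw [hMd, hsing, Finset.sum_singleton] at this
      simpa [hvaldef] using this.symm
    · -- q ∈ out t
      have ht : t ∈ N.pIn q := mem_pIn.mpr h
      have hsing : N.pIn q = {t} :=
        Finset.eq_singleton_iff_unique_mem.mpr
          ⟨ht, fun x hx => Finset.card_le_one.mp (hfbcf q).1 x hx t ht⟩
      have hM0 : N.M0 q = 0 := by
        simp [M0, hsing]
      simp [hvaldef, hM0, hsing]
    · exact absurd h id
  have hconst : ∀ v w, val v = val w := by
    intro v w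
    induction hconn v w with
    | refl => rfl
    | tail _ h ih =>
      rcases h with h | h
      · exact ih.trans (harc _ _ h)
      · exact ih.trans (harc _ _ h).symm
  have hone : ∃ v, val v = 1 := by
    rcases hproper with ⟨p, hsrc, hpo⟩ | ⟨p, hsnk, hpi⟩
    · refine ⟨Sum.inl p, ?_⟩
      have hsrc' : N.pIn p = ∅ := hsrc
      simp [hvaldef, M0, hsrc']
    · refine ⟨Sum.inl p, ?_⟩
      have hsnk' : N.pOut p = ∅ := hsnk
      have hMd : N.Md p = 1 := by simp [Md, hsnk']
      have := hmark p
      rw [hMd, hsnk', Finset.sum_empty] at this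
      simpa [hvaldef] using this.symm
  obtain ⟨v₀, hv₀⟩ := hone
  have hcount : ∀ t, ts.count t = 1 := fun t => (hconst (Sum.inr t) v₀).trans hv₀
  -- any R-step strictly increases the firing index
  have hmono : ∀ a b, N.Rrel a b → ts.idxOf a < ts.idxOf b := by
    rintro a b ⟨p, h1, h2⟩
    have ha : a ∈ N.pIn p := mem_pIn.mpr h1
    have hb : b ∈ N.pOut p := mem_pOut.mpr h2
    have hin : N.pIn p = {a} :=
      Finset.eq_singleton_iff_unique_mem.mpr
        ⟨ha, fun x hx => Finset.card_le_one.mp (hfbcf p).1 x hx a ha⟩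
    have hout : N.pOut p = {b} :=
      Finset.eq_singleton_iff_unique_mem.mpr
        ⟨hb, fun x hx => Finset.card_le_one.mp (hfbcf p).2 x hx b hb⟩
    have hne : a ≠ b := by
      rintro rfl
      exact Finset.disjoint_left.mp (hself a) h2 h1
    have hM0 : N.M0 p = 0 := by simp [M0, hin]
    have hbmem : b ∈ ts := List.count_pos_iff.mp (by rw [hcount b]; norm_num)
    exact N.fire_order hne hts p hin hout hM0 hbmem
  have hmono' : ∀ a b, Relation.TransGen N.Rrel a b → ts.idxOf a < ts.idxOf b := by
    intro a b h
    induction h with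
    | single h => exact hmono _ _ h
    | tail _ h ih => exact ih.trans (hmono _ _ h)
  intro v hcyc
  obtain ⟨t, ht⟩ := N.exists_transGen_R hcyc
  exact lt_irrefl _ (hmono' t t ht)
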